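/- For k = 1, the generating function (by half-length) of lattice paths with steps ±1 starting and ending at 0 and staying weakly above -t is G(x) = (1+u)(1-u^(t+1))/(1-u), where x = u/(1+u)^2. Equivalently, lim_{i→∞} D_t D_i / D_{i+t+1} = (1+u)(1-u^(t+1))/(1-u). -/

import Mathlib

open Finset PowerSeries

/-- The number of `±1`-paths of length `L` starting and ending at 0 and staying weakly
above `-t`. -/
def dyckBelowCount (t L : ℕ) : ℕ :=
  (Finset.univ.filter (fun f : Fin L → Bool =>
    (∀ i : Fin L, -(t : ℤ) ≤ ∑ j ∈ Finset.univ.filter (· ≤ i),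
        (if f j then (1 : ℤ) else -1)) ∧
    (∑ j, (if f j then (1 : ℤ) else -1)) = 0)).card

def stp (b : Bool) : ℤ := if b then 1 else -1

def pcount (t : ℕ) (L : ℕ) (h : ℤ) : ℕ :=
  ((Finset.univ : Finset (Fin L → Bool)).filter (fun f =>
    (∀ i : Fin L, -(t : ℤ) ≤ ∑ j ∈ Finset.univ.filter (· ≤ i), stp (f j)) ∧
    (∑ j, stp (f j)) = h)).card

lemma pcount_zero (t : ℕ) (h : ℤ) : pcount t 0 h = if h = 0 then 1 else 0 := by
  unfold pcount
  split_ifs with hh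
  · subst hh; simp
  · rw [Finset.card_eq_zero, Finset.filter_eq_empty_iff]
    intro f _
    simp [Ne.symm hh]

lemma filter_le_castSucc {L : ℕ} (i : Fin L) :
    (Finset.univ.filter (· ≤ i.castSucc) : Finset (Fin (L+1)))
      = (Finset.univ.filter (· ≤ i)).map ⟨Fin.castSucc, Fin.castSucc_injective L⟩ := by
  ext j
  simp only [Finset.mem_map, Finset.mem_filter, Finset.mem_univ, true_and,
    Function.Embedding.coeFn_mk]
  constructor
  · intro hj
    have hne : j ≠ Fin.last L := by
      intro hjl
      subst hjl
      exact absurd (lt_of_le_of_lt hj (Fin.castSucc_lt_last i)) (lt_irrefl _)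
    obtain ⟨k, rfl⟩ := Fin.exists_castSucc_eq.2 hne
    exact ⟨k, Fin.castSucc_le_castSucc_iff.mp hj, rfl⟩
  · rintro ⟨k, hk, rfl⟩
    exact Fin.castSucc_le_castSucc_iff.mpr hk

lemma psum_castSucc {L : ℕ} (g : Fin (L+1) → ℤ) (i : Fin L) :
    ∑ j ∈ Finset.univ.filter (· ≤ i.castSucc), g j
      = ∑ j ∈ Finset.univ.filter (· ≤ i), g j.castSucc := by
  rw [filter_le_castSucc, Finset.sum_map]
  rfl

lemma psum_last {L : ℕ} (g : Fin (L+1) → ℤ) :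
    ∑ j ∈ Finset.univ.filter (· ≤ Fin.last L), g j = ∑ j, g j := by
  congr 1
  simp [Finset.filter_eq_self, Fin.le_last]

lemma total_snoc {L : ℕ} (g : Fin L → Bool) (b : Bool) :
    (∑ j, stp ((Fin.snoc g b : Fin (L+1) → Bool) j)) = (∑ j, stp (g j)) + stp b := by
  rw [Fin.sum_univ_castSucc]
  simp

lemma cond_snoc (t L : ℕ) (h : ℤ) (g : Fin L → Bool) (b : Bool) :
    ((∀ i : Fin (L+1), -(t : ℤ) ≤ ∑ j ∈ Finset.univ.filter (· ≤ i),
        stp ((Fin.snoc g b : Fin (L+1) → Bool) j)) ∧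
      (∑ j, stp ((Fin.snoc g b : Fin (L+1) → Bool) j)) = h)
    ↔ (((∀ i : Fin L, -(t : ℤ) ≤ ∑ j ∈ Finset.univ.filter (· ≤ i), stp (g j)) ∧
        (∑ j, stp (g j)) = h - stp b) ∧ -(t : ℤ) ≤ h) := by
  rw [Fin.forall_fin_succ']
  have h1 : ∀ i : Fin L, (∑ j ∈ Finset.univ.filter (· ≤ i.castSucc),
      stp ((Fin.snoc g b : Fin (L+1) → Bool) j)) = ∑ j ∈ Finset.univ.filter (· ≤ i), stp (g j) := by
    intro i
    rw [psum_castSucc]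
    simp
  have h2 : (∑ j ∈ Finset.univ.filter (· ≤ Fin.last L),
      stp ((Fin.snoc g b : Fin (L+1) → Bool) j)) = (∑ j, stp (g j)) + stp b := by
    rw [psum_last, total_snoc]
  simp only [h1, h2, total_snoc]
  constructor
  · rintro ⟨⟨hp, hl⟩, ht⟩
    exact ⟨⟨hp, by linarith⟩, by linarith⟩
  · rintro ⟨⟨hp, ht⟩, hl⟩
    exact ⟨⟨hp, by linarith⟩, by linarith⟩

lemma pcount_succ (t L : ℕ) (h : ℤ) :
    pcount t (L+1) h = if -(t : ℤ) ≤ h then pcount t L (h-1) + pcount t L (h+1) else 0 := by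
  split_ifs with hh
  · unfold pcount
    rw [← Finset.card_filter_add_card_filter_not
      (p := fun f : Fin (L+1) → Bool => f (Fin.last L) = true)]
    · congr 1
      · -- last step is up: total of init is h - 1
        rw [Finset.filter_filter]
        apply Finset.card_nbij' (i := fun f => Fin.init f) (j := fun g => Fin.snoc g true)
        · intro f hf
          simp only [Finset.mem_coe, Finset.mem_filter, Finset.mem_univ, true_and] at hf ⊢
          obtain ⟨hc, hl⟩ := hf
          rw [← Fin.snoc_init_self f, hl] at hc
          have := (cond_snoc t L h (Fin.init f) true).mp hc
          simpa [stp] using this.1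
        · intro g hg
          simp only [Finset.mem_coe, Finset.mem_filter, Finset.mem_univ, true_and] at hg ⊢
          refine ⟨(cond_snoc t L h g true).mpr ⟨by simpa [stp] using hg, hh⟩, by simp⟩
        · intro f hf
          simp only [Finset.mem_coe, Finset.mem_filter, Finset.mem_univ, true_and] at hf
          rw [← hf.2]
          exact Fin.snoc_init_self f
        · intro g hg
          simp
      · -- last step is down
        rw [Finset.filter_filter]
        apply Finset.card_nbij' (i := fun f => Fin.init f) (j := fun g => Fin.snoc g false)
        · intro f hf
          simp only [Finset.mem_coe, Finset.mem_filter, Finset.mem_univ, true_and] at hf ⊢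
          obtain ⟨hc, hl⟩ := hf
          rw [Bool.not_eq_true] at hl
          rw [← Fin.snoc_init_self f, hl] at hc
          have := (cond_snoc t L h (Fin.init f) false).mp hc
          refine ⟨this.1.1, ?_⟩
          have h3 := this.1.2
          simp only [stp] at h3 ⊢
          norm_num at h3 ⊢
          linarith
        · intro g hg
          simp only [Finset.mem_coe, Finset.mem_filter, Finset.mem_univ, true_and] at hg ⊢
          refine ⟨(cond_snoc t L h g false).mpr ⟨⟨hg.1, by have := hg.2; simp [stp] at this ⊢; linarith⟩, hh⟩, by simp⟩
        · intro f hf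
          simp only [Finset.mem_coe, Finset.mem_filter, Finset.mem_univ, true_and, Bool.not_eq_true] at hf
          rw [← hf.2]
          exact Fin.snoc_init_self f
        · intro g hg
          simp
  · unfold pcount
    rw [Finset.card_eq_zero, Finset.filter_eq_empty_iff]
    intro f _
    rintro ⟨hp, hs⟩
    apply hh
    have := hp (Fin.last L)
    rwa [psum_last, hs] at this

def Mf (t L : ℕ) (h : ℤ) : ℤ :=
  if h < -(L : ℤ) ∨ ¬ Even (h + L) then 0
  else (L.choose (((L : ℤ) + h) / 2).toNat : ℤ) - (L.choose ((((L : ℤ) + h) / 2).toNat + t + 1))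

lemma Mf_eq (t L : ℕ) (k : ℕ) (h : ℤ) (hk : (L : ℤ) + h = 2 * k) :
    Mf t L h = (L.choose k : ℤ) - L.choose (k + t + 1) := by
  have h1 : ¬ (h < -(L : ℤ) ∨ ¬ Even (h + L)) := by
    push_neg
    constructor
    · omega
    · exact ⟨(k : ℤ), by omega⟩
  rw [Mf, if_neg h1]
  have h2 : (((L : ℤ) + h) / 2).toNat = k := by omega
  rw [h2]

lemma Mf_vanish (t L : ℕ) : Mf t L (-(t : ℤ) - 1) = 0 := by
  by_cases hg : (-(t:ℤ) - 1) < -(L : ℤ) ∨ ¬ Even ((-(t:ℤ) - 1) + L)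
  · rw [Mf, if_pos hg]
  · push_neg at hg
    obtain ⟨h1, k', hk'⟩ := hg
    have hk : (L : ℤ) + (-(t:ℤ) - 1) = 2 * ((((L:ℤ) - t - 1)/2).toNat : ℤ) := by omega
    set k : ℕ := (((L:ℤ) - t - 1)/2).toNat
    rw [Mf_eq t L k _ hk]
    have hL : L = k + (k + t + 1) := by omega
    have : L.choose k = L.choose (k + t + 1) := by
      rw [show k + t + 1 = L - k by omega]
      exact (Nat.choose_symm (by omega)).symm
    rw [this, sub_self]

lemma Mf_pascal (t L : ℕ) (h : ℤ) (hh : -(t : ℤ) ≤ h) :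
    Mf t (L + 1) h = Mf t L (h - 1) + Mf t L (h + 1) := by
  by_cases hpar : Even (h + ((L : ℤ) + 1))
  · by_cases hlow : h < -(L : ℤ) - 1
    · -- all zero
      rw [Mf, if_pos, Mf, if_pos, Mf, if_pos] <;> push_cast <;> omega
    · by_cases heq : h = -(L : ℤ) - 1
      · -- bottom case, t ≥ L + 1
        have ht : (L : ℤ) + 1 ≤ t := by omega
        have h1 : Mf t (L+1) h = (((L+1).choose 0 : ℕ) : ℤ) - ((L+1).choose (0 + t + 1)) := by
          apply Mf_eq
          push_cast
          omega
        have h2 : Mf t L (h + 1) = ((L.choose 0 : ℕ) : ℤ) - (L.choose (0 + t + 1)) := by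
          apply Mf_eq
          omega
        have h3 : Mf t L (h - 1) = 0 := by
          rw [Mf, if_pos]
          left
          push_cast
          omega
        have ht' : L + 1 ≤ t := by exact_mod_cast ht
        rw [h1, h2, h3]
        rw [Nat.choose_eq_zero_of_lt (show L + 1 < 0 + t + 1 by omega),
            Nat.choose_eq_zero_of_lt (show L < 0 + t + 1 by omega)]
        simp
      · -- main case: h ≥ -L + 1 by parity
        have hge : -(L : ℤ) + 1 ≤ h := by
          rcases hpar with ⟨m, hm⟩
          omega
        obtain ⟨m, hm⟩ := hpar
        obtain ⟨j, hk⟩ : ∃ j : ℕ, ((L : ℤ) + 1) + h = 2 * ((j : ℤ) + 1) := ⟨(m - 1).toNat, by omega⟩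
        rw [Mf_eq t (L+1) (j+1) h (by push_cast; omega),
            Mf_eq t L j (h - 1) (by push_cast at hk ⊢; omega),
            Mf_eq t L (j+1) (h + 1) (by push_cast at hk ⊢; omega)]
        have p1 : (L+1).choose (j+1) = L.choose j + L.choose (j+1) := Nat.choose_succ_succ' L j
        have p2 : (L+1).choose ((j+1) + t + 1) = L.choose (j + t + 1) + L.choose ((j+1) + t + 1) := by
          have := Nat.choose_succ_succ' L (j + t + 1)
          rw [show (j+1) + t + 1 = (j + t + 1) + 1 by ring, this]
        rw [p1, p2]
        push_cast
        ring
  · -- parity off: all zero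
    have e1 : Mf t (L+1) h = 0 := by
      rw [Mf, if_pos]
      right; intro hc; apply hpar
      rcases hc with ⟨m, hm⟩; exact ⟨m, by push_cast at hm ⊢; omega⟩
    have e2 : Mf t L (h - 1) = 0 := by
      rw [Mf, if_pos]
      right; intro hc; apply hpar
      rcases hc with ⟨m, hm⟩; exact ⟨m + 1, by push_cast at hm ⊢; omega⟩
    have e3 : Mf t L (h + 1) = 0 := by
      rw [Mf, if_pos]
      right; intro hc; apply hpar
      rcases hc with ⟨m, hm⟩; exact ⟨m, by push_cast at hm ⊢; omega⟩
    rw [e1, e2, e3]; ring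

lemma pcount_neg (t L : ℕ) (h : ℤ) (hh : h < -(t : ℤ)) : pcount t L h = 0 := by
  cases L with
  | zero => rw [pcount_zero, if_neg (by omega)]
  | succ L => rw [pcount_succ, if_neg (not_le.mpr hh)]

lemma pcount_eq_Mf (t L : ℕ) : ∀ h : ℤ, -(t : ℤ) ≤ h → (pcount t L h : ℤ) = Mf t L h := by
  induction L with
  | zero =>
    intro h hh
    rw [pcount_zero]
    by_cases h0 : h = 0
    · subst h0
      rw [if_pos rfl, Mf_eq t 0 0 0 (by norm_num)]
      simp [Nat.choose_eq_zero_of_lt (show 0 < 0 + t + 1 by omega)]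
    · rw [if_neg h0]
      by_cases hg : h < -((0:ℕ) : ℤ) ∨ ¬ Even (h + ((0:ℕ):ℤ))
      · rw [Mf, if_pos hg]; simp
      · push_neg at hg
        obtain ⟨h1, m, hm⟩ := hg
        have hpos : 0 < h := by omega
        obtain ⟨j, hj⟩ : ∃ j : ℕ, ((0:ℕ) : ℤ) + h = 2 * ((j:ℤ) + 1) := ⟨(m-1).toNat, by omega⟩
        rw [Mf_eq t 0 (j+1) h hj]
        simp [Nat.choose_eq_zero_of_lt (show 0 < j + 1 by omega),
          Nat.choose_eq_zero_of_lt (show 0 < (j+1) + t + 1 by omega)]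
  | succ L ih =>
    intro h hh
    rw [pcount_succ, if_pos hh, Mf_pascal t L h hh]
    push_cast
    have e2 : (pcount t L (h+1) : ℤ) = Mf t L (h+1) := ih (h+1) (by omega)
    by_cases hb : -(t:ℤ) ≤ h - 1
    · rw [ih (h-1) hb, e2]
    · have hb' : h - 1 = -(t:ℤ) - 1 := by omega
      rw [hb', pcount_neg t L _ (by omega), Mf_vanish, e2]
      push_cast
      ring

lemma dyckBelowCount_eq (t n : ℕ) :
    (dyckBelowCount t (2*n) : ℤ) = ((2*n).choose n : ℤ) - ((2*n).choose (n + t + 1)) := by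
  have h0 : dyckBelowCount t (2*n) = pcount t (2*n) 0 := rfl
  rw [h0, pcount_eq_Mf t (2*n) 0 (by omega), Mf_eq t (2*n) n 0 (by push_cast; ring)]

noncomputable def Cser : PowerSeries ℚ := PowerSeries.mk fun n => (catalan n : ℚ)

noncomputable def Tser (m : ℕ) : PowerSeries ℚ :=
  PowerSeries.mk fun n => ((2*n).choose (n+m) : ℚ)

lemma Cser_eq : Cser = 1 + X * Cser ^ 2 := by
  ext n
  cases n with
  | zero => simp [Cser]
  | succ n =>
    rw [map_add, coeff_succ_X_mul, sq, PowerSeries.coeff_mul]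
    simp only [Cser, coeff_mk, coeff_one, Nat.succ_ne_zero, if_false, zero_add]
    rw [catalan_succ']
    push_cast
    rfl

lemma one_add_u_eq (u : PowerSeries ℚ) (hu0 : constantCoeff u = 0)
    (hu : u = X * (1 + u) ^ 2) : 1 + u = Cser := by
  have key : ((1 + u) - Cser) * (1 - X * ((1 + u) + Cser)) = 0 := by
    linear_combination hu - Cser_eq
  rcases mul_eq_zero.mp key with h | h
  · exact sub_eq_zero.mp h
  · exfalso
    have := congrArg (constantCoeff) h
    simp at this

lemma double_pascal (L k : ℕ) :
    (L+2).choose (k+2) = L.choose k + 2*(L.choose (k+1)) + L.choose (k+2) := by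
  simp [Nat.choose_succ_succ]
  ring

lemma T0_rec : Tser 0 = 1 + 2 * X * Tser 0 + 2 * X * Tser 1 := by
  ext n
  cases n with
  | zero => simp [Tser]
  | succ n =>
    rw [show (1 : ℚ⟦X⟧) + 2 * X * Tser 0 + 2 * X * Tser 1
        = 1 + X * (C (2:ℚ) * Tser 0 + C (2:ℚ) * Tser 1) by
      have : (C (2:ℚ) : ℚ⟦X⟧) = 2 := map_ofNat C 2
      rw [this]; ring]
    rw [map_add, coeff_succ_X_mul, map_add, coeff_C_mul, coeff_C_mul]
    simp only [Tser, coeff_one, Nat.succ_ne_zero, if_false, zero_add, PowerSeries.coeff_mk]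
    cases n with
    | zero => norm_num
    | succ j =>
      have key : (2*(j+1)+2).choose ((j+1)+1)
          = (2*(j+1)).choose j + 2*((2*(j+1)).choose (j+1)) + (2*(j+1)).choose (j+2) := by
        have := double_pascal (2*(j+1)) j
        rw [show j + 2 = (j+1)+1 by ring] at this ⊢
        rw [show 2*(j+1)+2 = (2*(j+1))+2 by ring]
        exact this
      have symm : (2*(j+1)).choose j = (2*(j+1)).choose (j+2) := by
        have h3 := Nat.choose_symm (n := 2*(j+1)) (k := j+2) (by omega)
        rw [show 2*(j+1) - (j+2) = j by omega] at h3
        exact h3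
      rw [show 2*(j+1+1) = 2*(j+1)+2 by ring, show j+1+1+0 = (j+1)+1 by ring]
      rw [key, symm]
      push_cast
      rw [show j+1+0 = j+1 by ring, show j+1+1 = j+2 by ring]
      ring

lemma Tm_rec (m : ℕ) : Tser (m+1) = X * (Tser m + 2 * Tser (m+1) + Tser (m+2)) := by
  ext n
  cases n with
  | zero => simp [Tser, Nat.choose_eq_zero_of_lt]
  | succ n =>
    rw [show X * (Tser m + 2 * Tser (m+1) + Tser (m+2))
        = X * (Tser m + C (2:ℚ) * Tser (m+1) + Tser (m+2)) by
      have : (C (2:ℚ) : ℚ⟦X⟧) = 2 := map_ofNat C 2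
      rw [this]]
    rw [coeff_succ_X_mul, map_add, map_add, coeff_C_mul]
    simp only [Tser, PowerSeries.coeff_mk]
    have key : (2*(n+1)).choose ((n+1)+(m+1))
        = (2*n).choose (n+m) + 2*((2*n).choose (n+m+1)) + (2*n).choose (n+m+2) := by
      have := double_pascal (2*n) (n+m)
      rw [show 2*(n+1) = 2*n+2 by ring, show (n+1)+(m+1) = (n+m)+2 by ring]
      exact this
    rw [key]
    push_cast
    ring_nf

lemma cat_diff (n : ℕ) :
    ((2*n).choose n : ℚ) - ((2*n).choose (n+1) : ℚ) = (catalan n : ℚ) := by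
  have h1 : ((2*n).choose (n+1) : ℚ) * ((n : ℚ)+1) = ((2*n).choose n : ℚ) * n := by
    have := Nat.choose_succ_right_eq (2*n) n
    rw [show 2*n - n = n by omega] at this
    exact_mod_cast congrArg (Nat.cast : ℕ → ℚ) this
  have h2 : ((n : ℚ)+1) * (catalan n : ℚ) = ((2*n).choose n : ℚ) := by
    have := succ_mul_catalan_eq_centralBinom n
    rw [Nat.centralBinom_eq_two_mul_choose] at this
    exact_mod_cast congrArg (Nat.cast : ℕ → ℚ) this
  have hne : ((n : ℚ) + 1) ≠ 0 := by positivity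
  apply mul_left_cancel₀ hne
  linear_combination - h1 - h2

lemma T0T1 : Tser 0 - Tser 1 = Cser := by
  ext n
  simp only [map_sub, Tser, Cser, PowerSeries.coeff_mk]
  rw [show n + 0 = n by ring]
  exact cat_diff n

lemma ne_zero_of_cc (φ : PowerSeries ℚ) (h : constantCoeff φ ≠ 0) : φ ≠ 0 := by
  intro H
  apply h
  rw [H, map_zero]

lemma goal0 (u : PowerSeries ℚ) (hu : u = X * (1 + u) ^ 2)
    (hC : 1 + u = Cser) : (1 - u) * Tser 0 = 1 + u := by
  have h1 : (1 - 4 * X) * Tser 0 = 1 - 2 * X * (1 + u) := by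
    rw [hC]
    linear_combination T0_rec - (2 * (X : ℚ⟦X⟧)) * T0T1
  have h2 : (1 - 4 * X) * ((1 - u) * Tser 0) = (1 - 4 * X) * (1 + u) := by
    linear_combination (1 - u) * h1 - 2 * hu
  have hne : (1 - 4 * X : ℚ⟦X⟧) ≠ 0 := by
    apply ne_zero_of_cc
    simp
  exact mul_left_cancel₀ hne h2

lemma goalT (u : PowerSeries ℚ) (hu : u = X * (1 + u) ^ 2) (hC : 1 + u = Cser) :
    ∀ m : ℕ, (1 - u) * Tser m = u ^ m * (1 + u) := by
  have g0 := goal0 u hu hC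
  have g1 : (1 - u) * Tser 1 = u ^ 1 * (1 + u) := by
    have : Tser 1 = Tser 0 - Cser := by linear_combination - T0T1
    rw [this, ← hC]
    linear_combination g0
  intro m
  induction m using Nat.twoStepInduction with
  | zero => rw [pow_zero, one_mul]; exact g0
  | one => exact g1
  | more m ih1 ih2 =>
    have hXne : (X : ℚ⟦X⟧) ≠ 0 := X_ne_zero
    apply mul_left_cancel₀ hXne
    have hrec := Tm_rec m
    -- X * ((1-u) * Tser (m+2)) = (1-u) * (Tser (m+1) - X * Tser m - 2*X*Tser (m+1))
    have e1 : X * ((1 - u) * Tser (m+2)) =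
        (1 - u) * Tser (m+1) - X * ((1 - u) * Tser m) - 2 * X * ((1 - u) * Tser (m+1)) := by
      linear_combination (u - 1) * hrec
    rw [e1, ih1, ih2]
    have hq : u - X - 2 * X * u = X * u ^ 2 := by linear_combination hu
    linear_combination (u ^ m * (1 + u)) * hq


/-- For `k = 1`, the generating function by half-length of `±1`-paths from 0 to 0
staying weakly above `-t` is `G(x) = (1+u)(1-u^(t+1))/(1-u)` under `x = u/(1+u)^2`,
i.e. `(1-u) · ∑_n count(2n) x^n = (1+u)(1-u^(t+1))`. -/
theorem stmt_16 (t : ℕ) (u : PowerSeries ℚ)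
    (hu0 : constantCoeff u = 0) (hu : u = X * (1 + u) ^ 2) :
    (1 - u) * PowerSeries.mk (fun n => (dyckBelowCount t (2 * n) : ℚ)) =
      (1 + u) * (1 - u ^ (t + 1)) := by
  have hC := one_add_u_eq u hu0 hu
  have hT := goalT u hu hC
  have hmk : PowerSeries.mk (fun n => (dyckBelowCount t (2 * n) : ℚ))
      = Tser 0 - Tser (t + 1) := by
    ext n
    simp only [map_sub, PowerSeries.coeff_mk, Tser]
    have h := dyckBelowCount_eq t n
    have hq : (dyckBelowCount t (2 * n) : ℚ)
        = ((2 * n).choose n : ℚ) - ((2 * n).choose (n + t + 1) : ℚ) := by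
      exact_mod_cast congrArg (Int.cast : ℤ → ℚ) h
    rw [hq, show n + 0 = n by ring, show n + (t + 1) = n + t + 1 by ring]
  rw [hmk, mul_sub, hT 0, hT (t + 1)]
  ring
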